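/- Combination rule for type consistency: let u, v be words over Σ_k with μ_a(u) = μ_u(u) and μ_a(v) = μ_u(v). Write μ_u(u) = c_u·o_u and μ_u(v) = c_v·o_v, where c_u, c_v consist only of closing parentheses and o_u, o_v only of opening parentheses, and let t = min(|o_u|, |c_v|). Then μ_a(uv) = μ_u(uv) if and only if for every i with 1 ≤ i ≤ t, the type of the (|o_u| − i + 1)-th symbol of o_u equals the type of the i-th symbol of c_v. -/
import Mathlib


/-- The alphabet `Σ_k` of `k` types of opening (`op`) and closing (`cl`) parentheses. -/
inductive Par (k : ℕ) where
  | op : Fin k → Par k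
  | cl : Fin k → Par k
deriving DecidableEq

namespace Par

/-- One step of the type-unaware reduction: `μ_u(zσ)` computed from `μ_u(z)`. -/
def muUStep {k : ℕ} (z : List (Par k)) (σ : Par k) : List (Par k) :=
  match z.getLast?, σ with
  | some (op _), cl _ => z.dropLast
  | _, _ => z ++ [σ]

/-- The type-unaware reduction `μ_u`. -/
def muU {k : ℕ} (w : List (Par k)) : List (Par k) := w.foldl muUStep []

/-- One step of the type-aware reduction: cancellation requires matching types. -/
def muAStep {k : ℕ} (z : List (Par k)) (σ : Par k) : List (Par k) :=
  match z.getLast?, σ with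
  | some (op i), cl j => if i = j then z.dropLast else z ++ [σ]
  | _, _ => z ++ [σ]

/-- The type-aware reduction `μ_a`. -/
def muA {k : ℕ} (w : List (Par k)) : List (Par k) := w.foldl muAStep []

/-- Is the symbol a closing parenthesis? -/
def isCl {k : ℕ} : Par k → Bool
  | cl _ => true
  | _ => false

/-- Is the symbol an opening parenthesis? -/
def isOp {k : ℕ} : Par k → Bool
  | op _ => true
  | _ => false

/-- `ℓ(w)`: the number of unmatched closing parentheses of `w`. -/
def ell {k : ℕ} (w : List (Par k)) : ℕ := (muU w).countP isCl

/-- `r(w)`: the number of unmatched opening parentheses of `w`. -/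
def rr {k : ℕ} (w : List (Par k)) : ℕ := (muU w).countP isOp

/-- The Dyck language `D_k`: smallest set containing `ε`, closed under
concatenation, and containing `⟨_i w ⟩_i` whenever it contains `w`. -/
inductive Dyck {k : ℕ} : List (Par k) → Prop where
  | nil : Dyck []
  | append {u v : List (Par k)} : Dyck u → Dyck v → Dyck (u ++ v)
  | wrap {w : List (Par k)} (i : Fin k) : Dyck w → Dyck (op i :: w ++ [cl i])

end Par

namespace Par

variable {k : ℕ}

lemma muUStep_nil (σ : Par k) : muUStep [] σ = [σ] := by cases σ <;> rfl
lemma muAStep_nil (σ : Par k) : muAStep [] σ = [σ] := by cases σ <;> rfl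

lemma muUStep_op (z : List (Par k)) (i : Fin k) : muUStep z (op i) = z ++ [op i] := by
  unfold muUStep
  rcases List.eq_nil_or_concat z with rfl | ⟨zs, a, rfl⟩
  · rfl
  · rw [List.concat_eq_append, List.getLast?_concat]; cases a <;> rfl

lemma muAStep_op (z : List (Par k)) (i : Fin k) : muAStep z (op i) = z ++ [op i] := by
  unfold muAStep
  rcases List.eq_nil_or_concat z with rfl | ⟨zs, a, rfl⟩
  · rfl
  · rw [List.concat_eq_append, List.getLast?_concat]; cases a <;> rfl

lemma muUStep_concat_op_cl (z : List (Par k)) (i j : Fin k) :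
    muUStep (z ++ [op i]) (cl j) = z := by
  unfold muUStep; rw [List.getLast?_concat]; simp

lemma muAStep_concat_op_cl (z : List (Par k)) (i j : Fin k) :
    muAStep (z ++ [op i]) (cl j) = if i = j then z else z ++ [op i] ++ [cl j] := by
  unfold muAStep; rw [List.getLast?_concat]
  split <;> simp_all

lemma muUStep_concat_cl (z : List (Par k)) (i : Fin k) (σ : Par k) :
    muUStep (z ++ [cl i]) σ = z ++ [cl i] ++ [σ] := by
  unfold muUStep; rw [List.getLast?_concat]

lemma muAStep_concat_cl (z : List (Par k)) (i : Fin k) (σ : Par k) :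
    muAStep (z ++ [cl i]) σ = z ++ [cl i] ++ [σ] := by
  unfold muAStep; rw [List.getLast?_concat]

lemma muUStep_foldl (z r : List (Par k)) (σ : Par k) :
    List.foldl muUStep z (muUStep r σ) = muUStep (List.foldl muUStep z r) σ := by
  rcases List.eq_nil_or_concat r with rfl | ⟨r', a, rfl⟩
  · rw [muUStep_nil]; rfl
  · rw [List.concat_eq_append]
    rcases a with i | i
    · rcases σ with j | j
      · rw [muUStep_op]
        simp [List.foldl_append]
      · rw [muUStep_concat_op_cl, List.foldl_append]
        show List.foldl muUStep z r' = muUStep (muUStep (List.foldl muUStep z r') (op i)) (cl j)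
        rw [muUStep_op, muUStep_concat_op_cl]
    · rw [muUStep_concat_cl]
      simp [List.foldl_append]

lemma muAStep_foldl (z r : List (Par k)) (σ : Par k) :
    List.foldl muAStep z (muAStep r σ) = muAStep (List.foldl muAStep z r) σ := by
  rcases List.eq_nil_or_concat r with rfl | ⟨r', a, rfl⟩
  · rw [muAStep_nil]; rfl
  · rw [List.concat_eq_append]
    rcases a with i | i
    · rcases σ with j | j
      · rw [muAStep_op]
        simp [List.foldl_append]
      · rw [muAStep_concat_op_cl]
        by_cases h : i = j
        · subst h
          rw [if_pos rfl, List.foldl_append]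
          show List.foldl muAStep z r' = muAStep (muAStep (List.foldl muAStep z r') (op i)) (cl i)
          rw [muAStep_op, muAStep_concat_op_cl, if_pos rfl]
        · rw [if_neg h]
          simp [List.foldl_append]
    · rw [muAStep_concat_cl]
      simp [List.foldl_append]
lemma foldl_muU (z w : List (Par k)) :
    List.foldl muUStep z w = List.foldl muUStep z (muU w) := by
  induction w using List.reverseRecOn with
  | nil => rfl
  | append_singleton w' σ ih =>
    have hmu : muU (w' ++ [σ]) = muUStep (muU w') σ := by
      simp [muU, List.foldl_append]
    rw [hmu, muUStep_foldl, List.foldl_append, ih]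
    rfl

lemma foldl_muA (z w : List (Par k)) :
    List.foldl muAStep z w = List.foldl muAStep z (muA w) := by
  induction w using List.reverseRecOn with
  | nil => rfl
  | append_singleton w' σ ih =>
    have hmu : muA (w' ++ [σ]) = muAStep (muA w') σ := by
      simp [muA, List.foldl_append]
    rw [hmu, muAStep_foldl, List.foldl_append, ih]
    rfl

lemma foldl_muU_ops (z : List (Par k)) (e : List (Fin k)) :
    List.foldl muUStep z (e.map op) = z ++ e.map op := by
  induction e generalizing z with
  | nil => simp
  | cons i e ih =>
    simp only [List.map_cons, List.foldl_cons, muUStep_op, ih]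
    simp

lemma foldl_muA_ops (z : List (Par k)) (e : List (Fin k)) :
    List.foldl muAStep z (e.map op) = z ++ e.map op := by
  induction e generalizing z with
  | nil => simp
  | cons i e ih =>
    simp only [List.map_cons, List.foldl_cons, muAStep_op, ih]
    simp

lemma muUStep_cls_cl (c : List (Fin k)) (j : Fin k) :
    muUStep (c.map cl) (cl j) = (c ++ [j]).map cl := by
  rcases List.eq_nil_or_concat c with rfl | ⟨c', i, rfl⟩
  · simp [muUStep_nil]
  · simp [muUStep_concat_cl]

lemma muAStep_cls_cl (c : List (Fin k)) (j : Fin k) :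
    muAStep (c.map cl) (cl j) = (c ++ [j]).map cl := by
  rcases List.eq_nil_or_concat c with rfl | ⟨c', i, rfl⟩
  · simp [muAStep_nil]
  · simp [muAStep_concat_cl]

/-- Unaware fold of a closing block from a reduced state. -/
lemma foldl_muU_cls (c o d : List (Fin k)) :
    List.foldl muUStep (c.map cl ++ o.map op) (d.map cl) =
      (c ++ d.drop o.length).map cl ++ (o.take (o.length - d.length)).map op := by
  induction d generalizing c o with
  | nil => simp
  | cons j d ih =>
    rcases List.eq_nil_or_concat o with rfl | ⟨o', i, rfl⟩
    · simp only [List.map_nil, List.append_nil, List.map_cons, List.foldl_cons,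
        muUStep_cls_cl]
      have := ih (c ++ [j]) []
      simp only [List.map_nil, List.append_nil, List.length_nil] at this
      rw [this]
      simp
    · rw [List.concat_eq_append]
      have hstep : muUStep (c.map cl ++ (o' ++ [i]).map op) (cl j)
          = c.map cl ++ o'.map op := by
        rw [List.map_append]
        simp only [List.map_cons, List.map_nil, ← List.append_assoc]
        exact muUStep_concat_op_cl _ i j
      rw [List.map_cons, List.foldl_cons, hstep, ih]
      have e1 : (o' ++ [i]).length = o'.length + 1 := by simp
      have h1 : List.drop (o' ++ [i]).length (j :: d) = List.drop o'.length d := by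
        rw [e1, List.drop_succ_cons]
      have h2 : List.take ((o' ++ [i]).length - (j :: d).length) (o' ++ [i])
          = List.take (o'.length - d.length) o' := by
        have e2 : (o' ++ [i]).length - (j :: d).length = o'.length - d.length := by
          rw [e1, List.length_cons, Nat.add_sub_add_right]
        rw [e2, List.take_append_of_le_length (Nat.sub_le _ _)]
      rw [h1, h2]

/-- Aware fold of a closing block, all-types-match case. -/
lemma foldl_muA_cls_match (c o d : List (Fin k))
    (hm : ∀ m, m < min o.length d.length → o[o.length - 1 - m]? = d[m]?) :
    List.foldl muAStep (c.map cl ++ o.map op) (d.map cl) =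
      (c ++ d.drop o.length).map cl ++ (o.take (o.length - d.length)).map op := by
  induction d generalizing c o with
  | nil => simp
  | cons j d ih =>
    rcases List.eq_nil_or_concat o with rfl | ⟨o', i, rfl⟩
    · simp only [List.map_nil, List.append_nil, List.map_cons, List.foldl_cons,
        muAStep_cls_cl]
      have := ih (c ++ [j]) [] (by simp)
      simp only [List.map_nil, List.append_nil, List.length_nil] at this
      rw [this]
      simp
    · rw [List.concat_eq_append] at hm ⊢
      have hij : i = j := by
        have h0 := hm 0 (by simp)
        rw [List.length_append, List.length_cons, List.length_nil] at h0
        have hidx : o'.length + 1 - 1 - 0 = o'.length := by omega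
        rw [hidx] at h0
        simp [List.getElem?_append_right] at h0
        exact h0
      subst hij
      have hstep : muAStep (c.map cl ++ (o' ++ [i]).map op) (cl i)
          = c.map cl ++ o'.map op := by
        rw [List.map_append]
        simp only [List.map_cons, List.map_nil, ← List.append_assoc]
        rw [muAStep_concat_op_cl, if_pos rfl]
      have hm' : ∀ m, m < min o'.length d.length → o'[o'.length - 1 - m]? = d[m]? := by
        intro m hmlt
        have h1 := hm (m + 1) (by
          simp only [List.length_append, List.length_cons, List.length_nil] at *
          omega)
        have hidx : (o' ++ [i]).length - 1 - (m + 1) = o'.length - 1 - m := by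
          simp; omega
        rw [hidx] at h1
        rw [List.getElem?_append_left (by omega)] at h1
        simpa using h1
      rw [List.map_cons, List.foldl_cons, hstep, ih _ _ hm']
      have e1 : (o' ++ [i]).length = o'.length + 1 := by simp
      have h1 : List.drop (o' ++ [i]).length (i :: d) = List.drop o'.length d := by
        rw [e1, List.drop_succ_cons]
      have h2 : List.take ((o' ++ [i]).length - (i :: d).length) (o' ++ [i])
          = List.take (o'.length - d.length) o' := by
        have e2 : (o' ++ [i]).length - (i :: d).length = o'.length - d.length := by
          rw [e1, List.length_cons, Nat.add_sub_add_right]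
        rw [e2, List.take_append_of_le_length (Nat.sub_le _ _)]
      rw [h1, h2]

/-- Aware fold keeps appending closers once the tail is a closer. -/
lemma foldl_muA_cl_block (z : List (Par k)) (j : Fin k) (e : List (Fin k)) :
    List.foldl muAStep (z ++ [cl j]) (e.map cl) = z ++ [cl j] ++ e.map cl := by
  induction e generalizing z j with
  | nil => simp
  | cons m e ih =>
    simp only [List.map_cons, List.foldl_cons, muAStep_concat_cl]
    rw [ih]
    simp

/-- Aware fold of a closing block, first-mismatch case. -/
lemma foldl_muA_cls_mismatch (c o d : List (Fin k)) (i0 : ℕ)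
    (hi0 : i0 < min o.length d.length)
    (hlt : ∀ m, m < i0 → o[o.length - 1 - m]? = d[m]?)
    (hne : o[o.length - 1 - i0]? ≠ d[i0]?) :
    List.foldl muAStep (c.map cl ++ o.map op) (d.map cl) =
      c.map cl ++ (o.take (o.length - i0)).map op ++ (d.drop i0).map cl := by
  induction d generalizing c o i0 with
  | nil => simp at hi0
  | cons j d ih =>
    rcases List.eq_nil_or_concat o with rfl | ⟨o', i, rfl⟩
    · simp at hi0
    · rw [List.concat_eq_append] at *
      rcases i0 with _ | m
      · -- mismatch right away: i ≠ j
        have hij : i ≠ j := by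
          intro h
          apply hne
          have hidx : (o' ++ [i]).length - 1 - 0 = o'.length := by simp
          rw [hidx]
          simp [List.getElem?_append_right, h]
        have hstep : muAStep (c.map cl ++ (o' ++ [i]).map op) (cl j)
            = (c.map cl ++ (o' ++ [i]).map op ++ [cl j]) := by
          rw [List.map_append]
          simp only [List.map_cons, List.map_nil, ← List.append_assoc]
          rw [muAStep_concat_op_cl, if_neg hij]
        simp only [List.map_cons, List.foldl_cons, hstep]
        rw [foldl_muA_cl_block]
        have : (o' ++ [i]).take ((o' ++ [i]).length - 0) = o' ++ [i] := by simp
        rw [this]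
        simp
      · -- types match at position 0, recurse
        have hij : i = j := by
          have h0 := hlt 0 (Nat.succ_pos m)
          have hidx : (o' ++ [i]).length - 1 - 0 = o'.length := by simp
          rw [hidx] at h0
          simp [List.getElem?_append_right] at h0
          exact h0
        subst hij
        have hstep : muAStep (c.map cl ++ (o' ++ [i]).map op) (cl i)
            = c.map cl ++ o'.map op := by
          rw [List.map_append]
          simp only [List.map_cons, List.map_nil, ← List.append_assoc]
          rw [muAStep_concat_op_cl, if_pos rfl]
        have hmin : m < min o'.length d.length := by
          simp only [List.length_append, List.length_cons, List.length_nil,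
            lt_min_iff] at hi0 ⊢
          omega
        have hlt' : ∀ m', m' < m → o'[o'.length - 1 - m']? = d[m']? := by
          intro m' hm'
          have h1 := hlt (m' + 1) (by omega)
          have hidx : (o' ++ [i]).length - 1 - (m' + 1) = o'.length - 1 - m' := by
            simp; omega
          rw [hidx] at h1
          rw [List.getElem?_append_left (by
            simp only [lt_min_iff] at hmin
            omega)] at h1
          simpa using h1
        have hne' : o'[o'.length - 1 - m]? ≠ d[m]? := by
          intro h
          apply hne
          have hidx : (o' ++ [i]).length - 1 - (m + 1) = o'.length - 1 - m := by
            simp; omega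
          rw [hidx]
          rw [List.getElem?_append_left (by
            simp only [lt_min_iff] at hmin
            omega)]
          simpa using h
        rw [List.map_cons, List.foldl_cons, hstep, ih _ _ m hmin hlt' hne']
        have e1 : (o' ++ [i]).length = o'.length + 1 := by simp
        have hA : (o' ++ [i]).length - (m + 1) = o'.length - m := by
          rw [e1, Nat.add_sub_add_right]
        have hB : List.take (o'.length - m) (o' ++ [i]) = List.take (o'.length - m) o' :=
          List.take_append_of_le_length (Nat.sub_le _ _)
        have hC : List.drop (m + 1) (i :: d) = List.drop m d := List.drop_succ_cons
        rw [hA, hB, hC]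

end Par

/-- combination rule for type consistency. If `μ_a(u) = μ_u(u)` and
`μ_a(v) = μ_u(v)`, with `μ_u(u) = c_u·o_u` and `μ_u(v) = c_v·o_v` and
`t = min(|o_u|, |c_v|)`, then `μ_a(uv) = μ_u(uv)` iff for all `1 ≤ i ≤ t` the type
of the `(|o_u| − i + 1)`-th symbol of `o_u` equals the type of the `i`-th symbol of
`c_v`. -/
theorem combination_rule {k : ℕ} (u v : List (Par k))
    (hu : Par.muA u = Par.muU u) (hv : Par.muA v = Par.muU v)
    (cu ou cv ov : List (Fin k))
    (hmu : Par.muU u = cu.map Par.cl ++ ou.map Par.op)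
    (hmv : Par.muU v = cv.map Par.cl ++ ov.map Par.op) :
    Par.muA (u ++ v) = Par.muU (u ++ v) ↔
      ∀ i, 1 ≤ i → i ≤ min ou.length cv.length →
        ou[ou.length - i]? = cv[i - 1]? := by
  classical
  have hA : Par.muA (u ++ v) =
      List.foldl Par.muAStep (cu.map Par.cl ++ ou.map Par.op) (cv.map Par.cl)
        ++ ov.map Par.op := by
    have h1 : Par.muA (u ++ v) = List.foldl Par.muAStep (Par.muA u) v := by
      simp [Par.muA, List.foldl_append]
    rw [h1, hu, hmu, Par.foldl_muA, hv, hmv, List.foldl_append, Par.foldl_muA_ops]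
  have hU : Par.muU (u ++ v) =
      (cu ++ cv.drop ou.length).map Par.cl
        ++ (ou.take (ou.length - cv.length)).map Par.op ++ ov.map Par.op := by
    have h1 : Par.muU (u ++ v) = List.foldl Par.muUStep (Par.muU u) v := by
      simp [Par.muU, List.foldl_append]
    rw [h1, hmu, Par.foldl_muU, hmv, List.foldl_append, Par.foldl_muU_ops,
      Par.foldl_muU_cls]
  constructor
  · intro heq i hi1 hi2
    by_contra hne
    have hex : ∃ m, m < min ou.length cv.length ∧ ¬ ou[ou.length - 1 - m]? = cv[m]? := by
      refine ⟨i - 1, by omega, ?_⟩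
      have e : ou.length - 1 - (i - 1) = ou.length - i := by omega
      rw [e]
      exact hne
    obtain ⟨hi0min, hi0ne⟩ := Nat.find_spec hex
    have hlt : ∀ m, m < Nat.find hex → ou[ou.length - 1 - m]? = cv[m]? := by
      intro m hm
      by_contra hc
      exact Nat.find_min hex hm ⟨lt_of_lt_of_le hm (le_of_lt hi0min), hc⟩
    have hcomp := Par.foldl_muA_cls_mismatch cu ou cv (Nat.find hex) hi0min hlt hi0ne
    have heq2 : List.foldl Par.muAStep (cu.map Par.cl ++ ou.map Par.op) (cv.map Par.cl)
        ++ ov.map Par.op =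
        (cu ++ cv.drop ou.length).map Par.cl
          ++ (ou.take (ou.length - cv.length)).map Par.op ++ ov.map Par.op := by
      rw [← hA, ← hU]; exact heq
    rw [hcomp] at heq2
    have hlen := congrArg List.length heq2
    simp only [List.length_append, List.length_map, List.length_take,
      List.length_drop] at hlen
    omega
  · intro hcond
    rw [hA, hU]
    have hm : ∀ m, m < min ou.length cv.length → ou[ou.length - 1 - m]? = cv[m]? := by
      intro m hmlt
      have h1 := hcond (m + 1) (by omega) (by omega)
      have e : ou.length - (m + 1) = ou.length - 1 - m := by omega
      rw [e] at h1
      simpa using h1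
    rw [Par.foldl_muA_cls_match cu ou cv hm]
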